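/- A query Q is not AR-entailed by D if and only if there exists a consistent subset D' of D such that for every consistent D'' with D' ⊆ D'' ⊆ D, Q D'' does not hold — provided Q is antitone-invariant in the following sense: Q is monotone. Precisely: for a monotone query Q, Q is not AR-entailed by D iff there exists a consistent D' ⊆ D such that no consistent superset D'' of D' within D satisfies Q. -/

import Mathlib

def IsRepair {F : Type} (C : Set F → Prop) (D : Finset F) (R : Set F) : Prop :=
  R ⊆ ↑D ∧ C R ∧ ∀ R' : Set F, R ⊆ R' → R' ⊆ ↑D → C R' → R' = R

def WeaklyConsistent {F : Type} (C : Set F → Prop) (D : Finset F) (X : Set F) : Prop :=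
  ∃ X' : Set F, X ⊆ X' ∧ X' ⊆ ↑D ∧ C X'

lemma exists_repair_ext {F : Type} (D : Finset F) (C : Set F → Prop)
    {D' : Set F} (hsub : D' ⊆ ↑D) (hc : C D') :
    ∃ R : Set F, IsRepair C D R ∧ D' ⊆ R := by
  have hfin : {X : Set F | D' ⊆ X ∧ X ⊆ ↑D ∧ C X}.Finite :=
    (D.finite_toSet.finite_subsets).subset (fun X hX => hX.2.1)
  obtain ⟨R, hR, hmax⟩ := Set.Finite.exists_maximal hfin ⟨D', subset_rfl, hsub, hc⟩
  refine ⟨R, ⟨hR.2.1, hR.2.2, fun R' h1 h2 h3 => ?_⟩, hR.1⟩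
  exact subset_antisymm (hmax ⟨hR.1.trans h1, h2, h3⟩ h1) h1

theorem stmt_19 {F : Type} (D : Finset F) (C : Set F → Prop) (hC : C ∅)
    (Q : Set F → Prop) (hmono : ∀ X Y : Set F, X ⊆ Y → Q X → Q Y) :
    (¬ ∀ R : Set F, IsRepair C D R → Q R) ↔
      ∃ D' : Set F, D' ⊆ ↑D ∧ C D' ∧
        ∀ D'' : Set F, D' ⊆ D'' → D'' ⊆ ↑D → C D'' → ¬ Q D'' := by
  constructor
  · intro h
    push_neg at h
    obtain ⟨R, hR, hnQ⟩ := h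
    exact ⟨R, hR.1, hR.2.1, fun D'' h1 h2 h3 => (hR.2.2 D'' h1 h2 h3) ▸ hnQ⟩
  · rintro ⟨D', hsub, hc, hall⟩ h
    obtain ⟨R, hR, hRext⟩ := exists_repair_ext D C hsub hc
    exact hall R hRext hR.1 hR.2.1 (h R hR)
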